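/- The commutator subgroup ⁅G,G⁆ of the group G equals the subgroup of GL_2(ℝ) generated by the matrices u and v. -/

import Mathlib

noncomputable section
namespace Stmt8Aux

open Matrix

private abbrev MM := Matrix (Fin 2) (Fin 2) ℝ

private abbrev RR : Submodule ℤ ℝ := Submodule.span ℤ ({1, Real.sqrt 2} : Set ℝ)
private abbrev LL : Submodule ℤ ℝ := Submodule.span ℤ ({Real.sqrt 2, 2} : Set ℝ)

private lemma s2 : Real.sqrt 2 * Real.sqrt 2 = 2 := Real.mul_self_sqrt (by norm_num)

private lemma mem_RR {a : ℝ} : a ∈ RR ↔ ∃ m n : ℤ, (m : ℝ) + n * Real.sqrt 2 = a := by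
  rw [Submodule.mem_span_pair]
  simp only [zsmul_eq_mul, mul_one]

private lemma mem_LL {a : ℝ} : a ∈ LL ↔ ∃ m n : ℤ, (m : ℝ) * Real.sqrt 2 + n * 2 = a := by
  rw [Submodule.mem_span_pair]
  simp only [zsmul_eq_mul]

private lemma RR_mul {a b : ℝ} (ha : a ∈ RR) (hb : b ∈ RR) : a * b ∈ RR := by
  rw [mem_RR] at *
  obtain ⟨m, n, rfl⟩ := ha
  obtain ⟨p, q, rfl⟩ := hb
  exact ⟨m*p + 2*n*q, m*q + n*p, by push_cast; linear_combination (-(n*q) : ℝ) * s2⟩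

private lemma LL_mul_RR {a b : ℝ} (ha : a ∈ LL) (hb : b ∈ RR) : a * b ∈ LL := by
  rw [mem_LL] at ha ⊢
  rw [mem_RR] at hb
  obtain ⟨m, n, rfl⟩ := ha
  obtain ⟨p, q, rfl⟩ := hb
  exact ⟨m*p + 2*n*q, m*q + n*p, by push_cast; linear_combination (-(m*q) : ℝ) * s2⟩

private lemma RR_mul_LL {a b : ℝ} (ha : a ∈ RR) (hb : b ∈ LL) : a * b ∈ LL := by
  rw [mul_comm]; exact LL_mul_RR hb ha

private lemma ee {a b c d e f g' h' : ℝ} (h1 : a = e) (h2 : b = f) (h3 : c = g')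
    (h4 : d = h') : !![a, b; c, d] = !![e, f; g', h'] := by rw [h1, h2, h3, h4]

/-- The invariant satisfied by all elements of `G`. -/
private def P (x : MMˣ) : Prop :=
  ∃ a b : ℝ, (x : MM) = !![a, b; 0, 1] ∧ a ≠ 0 ∧ a ∈ RR ∧ a⁻¹ ∈ RR ∧
    a - 1 ∈ LL ∧ a⁻¹ - 1 ∈ LL ∧ b ∈ RR

private lemma coe_inv_eq {x : MMˣ} {C : MM} (hC : (x : MM) * C = 1) :
    ((x⁻¹ : Stmt8Aux.MMˣ) : Stmt8Aux.MM) = C := by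
  calc ((x⁻¹ : Stmt8Aux.MMˣ) : Stmt8Aux.MM) = ((x⁻¹ : Stmt8Aux.MMˣ) : Stmt8Aux.MM) * ((x : MM) * C) := by rw [hC, mul_one]
  _ = (((x⁻¹ : Stmt8Aux.MMˣ) : Stmt8Aux.MM) * (x : MM)) * C := by rw [mul_assoc]
  _ = C := by rw [Units.inv_mul, one_mul]

private lemma P_one : P 1 := by
  refine ⟨1, 0, by rw [Units.val_one, Matrix.one_fin_two], one_ne_zero, ?_, ?_, ?_, ?_, ?_⟩
  · exact mem_RR.2 ⟨1, 0, by norm_num⟩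
  · rw [inv_one]; exact mem_RR.2 ⟨1, 0, by norm_num⟩
  · simpa using LL.zero_mem
  · rw [inv_one]; simpa using LL.zero_mem
  · exact RR.zero_mem

private lemma P_mul {x y : MMˣ} (hx : P x) (hy : P y) : P (x * y) := by
  obtain ⟨a, b, hxM, ha0, haR, haiR, haL, haiL, hbR⟩ := hx
  obtain ⟨c, d, hyM, hc0, hcR, hciR, hcL, hciL, hdR⟩ := hy
  refine ⟨a*c, a*d+b, ?_, mul_ne_zero ha0 hc0, RR_mul haR hcR, ?_, ?_, ?_,
    add_mem (RR_mul haR hdR) hbR⟩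
  · rw [Units.val_mul, hxM, hyM, Matrix.mul_fin_two]
    exact ee (by ring) (by ring) (by ring) (by ring)
  · rw [mul_inv]; exact RR_mul haiR hciR
  · have h : a*c - 1 = a*(c-1) + (a-1) := by ring
    rw [h]; exact add_mem (RR_mul_LL haR hcL) haL
  · have h : (a*c)⁻¹ - 1 = a⁻¹*(c⁻¹-1) + (a⁻¹-1) := by rw [mul_inv]; ring
    rw [h]; exact add_mem (RR_mul_LL haiR hciL) haiL

private lemma P_inv {x : MMˣ} (hx : P x) : P x⁻¹ := by
  obtain ⟨a, b, hxM, ha0, haR, haiR, haL, haiL, hbR⟩ := hx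
  have hinv : ((x⁻¹ : Stmt8Aux.MMˣ) : Stmt8Aux.MM) = !![a⁻¹, -(a⁻¹*b); 0, 1] := by
    refine coe_inv_eq ?_
    rw [hxM, Matrix.mul_fin_two, Matrix.one_fin_two]
    refine ee ?_ ?_ (by ring) (by ring) <;> field_simp <;> ring
  exact ⟨a⁻¹, -(a⁻¹*b), hinv, inv_ne_zero ha0, haiR, by rw [inv_inv]; exact haR, haiL,
    by rw [inv_inv]; exact haL, neg_mem (RR_mul haiR hbR)⟩

/-- unipotent unit -/
private def up (t : ℝ) : MMˣ :=
  ⟨!![1, t; 0, 1], !![1, -t; 0, 1],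
    by rw [Matrix.mul_fin_two, Matrix.one_fin_two]; exact ee (by ring) (by ring) (by ring) (by ring),
    by rw [Matrix.mul_fin_two, Matrix.one_fin_two]; exact ee (by ring) (by ring) (by ring) (by ring)⟩

private lemma up_coe (t : ℝ) : ((up t : Stmt8Aux.MMˣ) : Stmt8Aux.MM) = !![1, t; 0, 1] := rfl

private lemma up_add (s t : ℝ) : up (s + t) = up s * up t := by
  refine Units.ext ?_
  rw [Units.val_mul, up_coe, up_coe, up_coe, Matrix.mul_fin_two]
  exact ee (by ring) (by ring) (by ring) (by ring)

private def upHom : ℝ →+ Additive MMˣ where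
  toFun t := Additive.ofMul (up t)
  map_zero' := by
    refine congrArg Additive.ofMul (Units.ext ?_)
    rw [up_coe, Units.val_one, Matrix.one_fin_two]
  map_add' s t := congrArg Additive.ofMul (up_add s t)

private lemma up_zsmul (m : ℤ) (t : ℝ) : up ((m : ℝ) * t) = up t ^ m := by
  have h : Additive.ofMul (up ((m : ℝ) * t)) = m • Additive.ofMul (up t) := by
    have h0 := map_zsmul upHom m t
    rw [zsmul_eq_mul] at h0
    exact h0
  rw [← ofMul_zpow] at h
  exact Additive.ofMul.injective h

end Stmt8Aux
end

open scoped commutatorElement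

set_option maxHeartbeats 1000000 in
/-- The commutator subgroup of `G = ⟨g, h⟩ ≤ GL₂(ℝ)`, where `g = !![1+√2, 0; 0, 1]`
and `h = !![1, 1; 0, 1]`, equals the subgroup generated by `u = !![1, √2; 0, 1]` and
`v = !![1, 2; 0, 1]`. -/
theorem stmt8 (g h u v : (Matrix (Fin 2) (Fin 2) ℝ)ˣ)
    (hg : (g : Matrix (Fin 2) (Fin 2) ℝ) = !![1 + Real.sqrt 2, 0; 0, 1])
    (hh : (h : Matrix (Fin 2) (Fin 2) ℝ) = !![1, 1; 0, 1])
    (hu : (u : Matrix (Fin 2) (Fin 2) ℝ) = !![1, Real.sqrt 2; 0, 1])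
    (hv : (v : Matrix (Fin 2) (Fin 2) ℝ) = !![1, 2; 0, 1]) :
    ⁅Subgroup.closure {g, h}, Subgroup.closure {g, h}⁆ = Subgroup.closure {u, v} := by
  have s2 := Stmt8Aux.s2
  have hs2pos : (0:ℝ) < Real.sqrt 2 := Real.sqrt_pos.2 (by norm_num)
  -- entries of inverses of the generators
  have hgi : ((g⁻¹ : Stmt8Aux.MMˣ) : Stmt8Aux.MM) = !![Real.sqrt 2 - 1, 0; 0, 1] := by
    refine Stmt8Aux.coe_inv_eq ?_
    rw [hg, Matrix.mul_fin_two, Matrix.one_fin_two]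
    exact Stmt8Aux.ee (by linear_combination s2) (by ring) (by ring) (by ring)
  have hhi : ((h⁻¹ : Stmt8Aux.MMˣ) : Stmt8Aux.MM) = !![1, -1; 0, 1] := by
    refine Stmt8Aux.coe_inv_eq ?_
    rw [hh, Matrix.mul_fin_two, Matrix.one_fin_two]
    exact Stmt8Aux.ee (by ring) (by ring) (by ring) (by ring)
  have hui : ((u⁻¹ : Stmt8Aux.MMˣ) : Stmt8Aux.MM) = !![1, -Real.sqrt 2; 0, 1] := by
    refine Stmt8Aux.coe_inv_eq ?_
    rw [hu, Matrix.mul_fin_two, Matrix.one_fin_two]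
    exact Stmt8Aux.ee (by ring) (by ring) (by ring) (by ring)
  -- u and v as commutators
  have hucom : u = ⁅g, h⁆ := by
    refine Units.ext ?_
    rw [commutatorElement_def, Units.val_mul, Units.val_mul, Units.val_mul,
      hg, hh, hgi, hhi, hu, Matrix.mul_fin_two, Matrix.mul_fin_two, Matrix.mul_fin_two]
    exact (Stmt8Aux.ee (by linear_combination s2) (by linear_combination (-1 : ℝ) * s2)
      (by ring) (by ring)).symm
  have hvcom : v = ⁅g, u⁆ := by
    refine Units.ext ?_
    rw [commutatorElement_def, Units.val_mul, Units.val_mul, Units.val_mul,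
      hg, hu, hgi, hui, hv, Matrix.mul_fin_two, Matrix.mul_fin_two, Matrix.mul_fin_two]
    exact (Stmt8Aux.ee (by linear_combination s2) (by linear_combination (1 - Real.sqrt 2) * s2)
      (by ring) (by ring)).symm
  have hgG : g ∈ Subgroup.closure {g, h} := Subgroup.subset_closure (Set.mem_insert _ _)
  have hhG : h ∈ Subgroup.closure {g, h} := Subgroup.subset_closure (Set.mem_insert_of_mem _ rfl)
  have huG : u ∈ Subgroup.closure {g, h} := by
    rw [hucom, commutatorElement_def]
    exact mul_mem (mul_mem (mul_mem hgG hhG) (inv_mem hgG)) (inv_mem hhG)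
  -- membership of unipotents with entry in LL
  have key : ∀ t ∈ Stmt8Aux.LL, Stmt8Aux.up t ∈ Subgroup.closure {u, v} := by
    intro t ht
    rw [Stmt8Aux.mem_LL] at ht
    obtain ⟨m, n, rfl⟩ := ht
    rw [Stmt8Aux.up_add, Stmt8Aux.up_zsmul, Stmt8Aux.up_zsmul]
    have hu' : Stmt8Aux.up (Real.sqrt 2) = u := Units.ext (by rw [Stmt8Aux.up_coe, hu])
    have hv' : Stmt8Aux.up 2 = v := Units.ext (by rw [Stmt8Aux.up_coe, hv])
    rw [hu', hv']
    have hU : u ∈ Subgroup.closure ({u, v} : Set (Matrix (Fin 2) (Fin 2) ℝ)ˣ) :=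
      Subgroup.subset_closure (Set.mem_insert _ _)
    have hV : v ∈ Subgroup.closure ({u, v} : Set (Matrix (Fin 2) (Fin 2) ℝ)ˣ) :=
      Subgroup.subset_closure (Set.mem_insert_of_mem _ rfl)
    exact mul_mem (Subgroup.zpow_mem _ hU m) (Subgroup.zpow_mem _ hV n)
  apply le_antisymm
  · rw [Subgroup.commutator_le]
    intro x hx y hy
    have hP : ∀ z : Stmt8Aux.MMˣ, z ∈ Subgroup.closure {g, h} → Stmt8Aux.P z := by
      intro z hz
      refine Subgroup.closure_induction (p := fun w _ => Stmt8Aux.P w) ?_ Stmt8Aux.P_one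
        (fun _ _ _ _ pa pb => Stmt8Aux.P_mul pa pb) (fun _ _ pa => Stmt8Aux.P_inv pa) hz
      intro w hw
      rcases hw with hw | hw
      · subst hw
        refine ⟨1 + Real.sqrt 2, 0, hg, by positivity, ?_, ?_, ?_, ?_, Stmt8Aux.RR.zero_mem⟩
        · exact Stmt8Aux.mem_RR.2 ⟨1, 1, by norm_num⟩
        · have : (1 + Real.sqrt 2)⁻¹ = Real.sqrt 2 - 1 := by
            refine inv_eq_of_mul_eq_one_right ?_
            linear_combination s2
          rw [this]; exact Stmt8Aux.mem_RR.2 ⟨-1, 1, by push_cast; ring⟩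
        · exact Stmt8Aux.mem_LL.2 ⟨1, 0, by norm_num⟩
        · have : (1 + Real.sqrt 2)⁻¹ = Real.sqrt 2 - 1 := by
            refine inv_eq_of_mul_eq_one_right ?_
            linear_combination s2
          rw [this]; exact Stmt8Aux.mem_LL.2 ⟨1, -1, by push_cast; ring⟩
      · rw [Set.mem_singleton_iff] at hw
        subst hw
        refine ⟨1, 1, hh, one_ne_zero, Stmt8Aux.mem_RR.2 ⟨1, 0, by norm_num⟩, ?_, ?_, ?_,
          Stmt8Aux.mem_RR.2 ⟨1, 0, by norm_num⟩⟩
        · rw [inv_one]; exact Stmt8Aux.mem_RR.2 ⟨1, 0, by norm_num⟩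
        · simpa using Stmt8Aux.LL.zero_mem
        · rw [inv_one]; simpa using Stmt8Aux.LL.zero_mem
    obtain ⟨a, b, hxM, ha0, haR, haiR, haL, haiL, hbR⟩ := hP x hx
    obtain ⟨c, d, hyM, hc0, hcR, hciR, hcL, hciL, hdR⟩ := hP y hy
    have hxi : ((x⁻¹ : Stmt8Aux.MMˣ) : Stmt8Aux.MM) = !![a⁻¹, -(a⁻¹*b); 0, 1] := by
      refine Stmt8Aux.coe_inv_eq ?_
      rw [hxM, Matrix.mul_fin_two, Matrix.one_fin_two]
      refine Stmt8Aux.ee ?_ ?_ (by ring) (by ring) <;> field_simp <;> ring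
    have hyi : ((y⁻¹ : Stmt8Aux.MMˣ) : Stmt8Aux.MM) = !![c⁻¹, -(c⁻¹*d); 0, 1] := by
      refine Stmt8Aux.coe_inv_eq ?_
      rw [hyM, Matrix.mul_fin_two, Matrix.one_fin_two]
      refine Stmt8Aux.ee ?_ ?_ (by ring) (by ring) <;> field_simp <;> ring
    have hcom : ⁅x, y⁆ = Stmt8Aux.up ((a - 1) * d + (1 - c) * b) := by
      refine Units.ext ?_
      rw [commutatorElement_def, Units.val_mul, Units.val_mul, Units.val_mul,
        hxM, hyM, hxi, hyi, Stmt8Aux.up_coe, Matrix.mul_fin_two, Matrix.mul_fin_two,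
        Matrix.mul_fin_two]
      refine Stmt8Aux.ee ?_ ?_ (by ring) (by ring) <;> field_simp <;> ring
    rw [hcom]
    exact key _ (add_mem (Stmt8Aux.LL_mul_RR haL hdR)
      (Stmt8Aux.LL_mul_RR (by simpa using neg_mem hcL) hbR))
  · rw [Subgroup.closure_le]
    intro z hz
    rcases hz with hz | hz
    · subst hz
      rw [hucom]
      exact Subgroup.commutator_mem_commutator hgG hhG
    · rw [Set.mem_singleton_iff] at hz
      subst hz
      rw [hvcom]
      exact Subgroup.commutator_mem_commutator hgG huG
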